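/- Let f : G → H be a graph map between simple graphs with f(v) = w for vertices v of G and w of H, and let k ≥ 2 be an integer. If γ is a path in G from v to v, then f ∘ γ is a path in H from w to w, and if paths γ, γ' in G from v to v satisfy γ ≃_k γ', then f ∘ γ ≃_k f ∘ γ' in H. Consequently, f induces a group homomorphism π₁^k[G,v] → π₁^k[H,w] sending [γ]_k to [f ∘ γ]_k. -/
import Mathlib



/-- A path of length `len` in a simple graph `G` from `v` to `w`: a function on `{0,…,len}`
(encoded as a function `ℕ → V` that is constantly `w` from index `len` on) whose consecutive
values are adjacent or equal. -/
structure GPath {V : Type*} (G : SimpleGraph V) (v w : V) where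
  len : ℕ
  toFun : ℕ → V
  source : toFun 0 = v
  target : toFun len = w
  step : ∀ i < len, G.Adj (toFun i) (toFun (i + 1)) ∨ toFun i = toFun (i + 1)
  junk : ∀ i, len ≤ i → toFun i = w

namespace GPath

variable {V : Type*} {G : SimpleGraph V}

/-- The constant path of length 0 at a vertex. -/
def refl (G : SimpleGraph V) (v : V) : GPath G v v where
  len := 0
  toFun := fun _ => v
  source := rfl
  target := rfl
  step := fun i hi => absurd hi (Nat.not_lt_zero i)
  junk := fun _ _ => rfl

/-- Concatenation of composable paths. -/
def concat {u v w : V} (γ : GPath G u v) (δ : GPath G v w) : GPath G u w where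
  len := γ.len + δ.len
  toFun := fun i => if i < γ.len then γ.toFun i else δ.toFun (i - γ.len)
  source := by
    by_cases h : 0 < γ.len
    · simpa [h] using γ.source
    · have h0 : γ.len = 0 := by omega
      have huv : u = v := by
        have h1 := γ.source; have h2 := γ.target
        rw [h0] at h2; rw [h1] at h2; exact h2
      show (if 0 < γ.len then γ.toFun 0 else δ.toFun (0 - γ.len)) = u
      rw [if_neg h, Nat.zero_sub, δ.source]
      exact huv.symm
  target := by
    have h : ¬ γ.len + δ.len < γ.len := by omega
    have h2 : γ.len + δ.len - γ.len = δ.len := by omega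
    simp only [h, if_false, h2, δ.target]
  step := by
    intro i hi
    by_cases h1 : i + 1 < γ.len
    · have h0 : i < γ.len := by omega
      simpa [h0, h1] using γ.step i h0
    · by_cases h0 : i < γ.len
      · -- i + 1 = γ.len
        have he : i + 1 = γ.len := by omega
        have h3 : i + 1 - γ.len = 0 := by omega
        have hval : δ.toFun (i + 1 - γ.len) = γ.toFun (i + 1) := by
          rw [h3, δ.source, he, γ.target]
        simp only [h0, if_true, h1, if_false, hval]
        exact γ.step i h0
      · have h3 : i + 1 - γ.len = (i - γ.len) + 1 := by omega
        simp only [h0, if_false, h1, if_false, h3]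
        exact δ.step (i - γ.len) (by omega)
  junk := by
    intro i hi
    have h : ¬ i < γ.len := by omega
    simp only [h, if_false]
    exact δ.junk _ (by omega)

/-- The reverse of a path: `γ̄(i) = γ(len − i)`. -/
def reverse {v w : V} (γ : GPath G v w) : GPath G w v where
  len := γ.len
  toFun := fun i => γ.toFun (γ.len - i)
  source := by simpa using γ.target
  target := by simpa using γ.source
  step := by
    intro i hi
    show G.Adj (γ.toFun (γ.len - i)) (γ.toFun (γ.len - (i + 1))) ∨
      γ.toFun (γ.len - i) = γ.toFun (γ.len - (i + 1))
    have h1 : γ.len - i = (γ.len - (i + 1)) + 1 := by omega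
    rcases γ.step (γ.len - (i + 1)) (by omega) with h | h
    · exact Or.inl (by rw [h1]; exact h.symm)
    · exact Or.inr (by rw [h1, ← h])
  junk := by
    intro i hi
    show γ.toFun (γ.len - i) = v
    have h : γ.len - i = 0 := by omega
    rw [h, γ.source]

end GPath

/-- Relation (A): `γ'` has length `l(γ) + 1` and agrees with `γ` up to an index `x` and,
shifted by one, from `x` on. -/
def RelA {V : Type*} {G : SimpleGraph V} {v w : V} (γ γ' : GPath G v w) : Prop :=
  γ'.len = γ.len + 1 ∧ ∃ x ≤ γ.len,
    (∀ i ≤ x, γ.toFun i = γ'.toFun i) ∧ (∀ i, x ≤ i → γ.toFun i = γ'.toFun (i + 1))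

/-- Relation (B)_k: `γ` and `γ'` have equal length and agree up to some index `i₀` and from
`i₀ + k` on. -/
def RelB {V : Type*} (k : ℕ) {G : SimpleGraph V} {v w : V} (γ γ' : GPath G v w) : Prop :=
  γ.len = γ'.len ∧ ∃ i₀ ≤ γ.len,
    (∀ i ≤ i₀, γ.toFun i = γ'.toFun i) ∧ (∀ i, i₀ + k ≤ i → γ.toFun i = γ'.toFun i)

/-- `≃_k`: the smallest equivalence relation on paths from `v` to `w` containing the
relations (A) and (B)_k.  The closed `k`-fundamental group `π₁^k[G,v]` is the quotient of
loops at `v` by `≃_k`. -/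
def CEq {V : Type*} (k : ℕ) {G : SimpleGraph V} {v w : V} : GPath G v w → GPath G v w → Prop :=
  Relation.EqvGen (fun γ γ' => RelA γ γ' ∨ RelB k γ γ')

theorem GPath.ext' {V : Type*} {G : SimpleGraph V} {v w : V} {γ δ : GPath G v w}
    (h1 : γ.len = δ.len) (h2 : ∀ i, γ.toFun i = δ.toFun i) : γ = δ := by
  cases γ; cases δ
  simp_all [funext_iff]

/-- Pushforward of a path along a graph map. -/
def GPath.map {V W : Type*} {G : SimpleGraph V} {H : SimpleGraph W} {v v' : V}
    (f : V → W) (hf : ∀ x y : V, G.Adj x y → H.Adj (f x) (f y) ∨ f x = f y)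
    (γ : GPath G v v') : GPath H (f v) (f v') where
  len := γ.len
  toFun := fun i => f (γ.toFun i)
  source := congrArg f γ.source
  target := congrArg f γ.target
  step := by
    intro i hi
    rcases γ.step i hi with h | h
    · exact hf _ _ h
    · exact Or.inr (congrArg f h)
  junk := fun i hi => congrArg f (γ.junk i hi)

namespace GPath
variable {V : Type*} {G : SimpleGraph V}

theorem concat_toFun_le {u v w : V} (γ : GPath G u v) (δ : GPath G v w) {i : ℕ}
    (h : i ≤ γ.len) : (γ.concat δ).toFun i = γ.toFun i := by
  show (if i < γ.len then γ.toFun i else δ.toFun (i - γ.len)) = γ.toFun i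
  rcases lt_or_eq_of_le h with h' | h'
  · rw [if_pos h']
  · subst h'
    rw [if_neg (lt_irrefl _), Nat.sub_self, δ.source, γ.target]

theorem concat_toFun_ge {u v w : V} (γ : GPath G u v) (δ : GPath G v w) {i : ℕ}
    (h : γ.len ≤ i) : (γ.concat δ).toFun i = δ.toFun (i - γ.len) := by
  show (if i < γ.len then γ.toFun i else δ.toFun (i - γ.len)) = δ.toFun (i - γ.len)
  rcases lt_or_eq_of_le h with h' | h'
  · rw [if_neg (by omega)]
  · subst h'
    rw [if_neg (lt_irrefl _)]

end GPath

theorem RelA.concat_right {V : Type*} {G : SimpleGraph V} {u v w : V}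
    {γ γ' : GPath G u v} (h : RelA γ γ') (δ : GPath G v w) :
    RelA (γ.concat δ) (γ'.concat δ) := by
  obtain ⟨hlen, x, hx, h1, h2⟩ := h
  refine ⟨by show γ'.len + δ.len = γ.len + δ.len + 1; omega, x, by show x ≤ γ.len + δ.len; omega,
    ?_, ?_⟩
  · intro i hi
    rw [GPath.concat_toFun_le γ δ (by omega), GPath.concat_toFun_le γ' δ (by omega), h1 i hi]
  · intro i hi
    by_cases hc : i ≤ γ.len
    · rw [GPath.concat_toFun_le γ δ hc, GPath.concat_toFun_le γ' δ (by omega), h2 i hi]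
    · rw [GPath.concat_toFun_ge γ δ (by omega), GPath.concat_toFun_ge γ' δ (by omega)]
      congr 1
      omega

theorem RelA.concat_left {V : Type*} {G : SimpleGraph V} {u v w : V}
    {γ γ' : GPath G v w} (h : RelA γ γ') (δ : GPath G u v) :
    RelA (δ.concat γ) (δ.concat γ') := by
  obtain ⟨hlen, x, hx, h1, h2⟩ := h
  refine ⟨by show δ.len + γ'.len = δ.len + γ.len + 1; omega, δ.len + x,
    by show δ.len + x ≤ δ.len + γ.len; omega, ?_, ?_⟩
  · intro i hi
    by_cases hc : i ≤ δ.len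
    · rw [GPath.concat_toFun_le δ γ hc, GPath.concat_toFun_le δ γ' hc]
    · rw [GPath.concat_toFun_ge δ γ (by omega), GPath.concat_toFun_ge δ γ' (by omega),
        h1 (i - δ.len) (by omega)]
  · intro i hi
    rw [GPath.concat_toFun_ge δ γ (by omega), GPath.concat_toFun_ge δ γ' (by omega)]
    have : i + 1 - δ.len = (i - δ.len) + 1 := by omega
    rw [this, h2 (i - δ.len) (by omega)]

theorem RelB.concat_right {V : Type*} {k : ℕ} {G : SimpleGraph V} {u v w : V}
    {γ γ' : GPath G u v} (h : RelB k γ γ') (δ : GPath G v w) :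
    RelB k (γ.concat δ) (γ'.concat δ) := by
  obtain ⟨hlen, i₀, hi₀, h1, h2⟩ := h
  refine ⟨by show γ.len + δ.len = γ'.len + δ.len; omega, i₀,
    by show i₀ ≤ γ.len + δ.len; omega, ?_, ?_⟩
  · intro i hi
    rw [GPath.concat_toFun_le γ δ (by omega), GPath.concat_toFun_le γ' δ (by omega), h1 i hi]
  · intro i hi
    by_cases hc : i ≤ γ.len
    · rw [GPath.concat_toFun_le γ δ hc, GPath.concat_toFun_le γ' δ (by omega), h2 i hi]
    · rw [GPath.concat_toFun_ge γ δ (by omega), GPath.concat_toFun_ge γ' δ (by omega), hlen]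

theorem RelB.concat_left {V : Type*} {k : ℕ} {G : SimpleGraph V} {u v w : V}
    {γ γ' : GPath G v w} (h : RelB k γ γ') (δ : GPath G u v) :
    RelB k (δ.concat γ) (δ.concat γ') := by
  obtain ⟨hlen, i₀, hi₀, h1, h2⟩ := h
  refine ⟨by show δ.len + γ.len = δ.len + γ'.len; omega, δ.len + i₀,
    by show δ.len + i₀ ≤ δ.len + γ.len; omega, ?_, ?_⟩
  · intro i hi
    by_cases hc : i ≤ δ.len
    · rw [GPath.concat_toFun_le δ γ hc, GPath.concat_toFun_le δ γ' hc]
    · rw [GPath.concat_toFun_ge δ γ (by omega), GPath.concat_toFun_ge δ γ' (by omega),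
        h1 (i - δ.len) (by omega)]
  · intro i hi
    rw [GPath.concat_toFun_ge δ γ (by omega), GPath.concat_toFun_ge δ γ' (by omega),
      h2 (i - δ.len) (by omega)]

theorem CEq.concat {V : Type*} {k : ℕ} {G : SimpleGraph V} {u v w : V}
    {a x : GPath G u v} {b y : GPath G v w} (ha : CEq k a x) (hb : CEq k b y) :
    CEq k (a.concat b) (x.concat y) := by
  have left : ∀ {p q : GPath G u v}, CEq k p q → CEq k (p.concat b) (q.concat b) := by
    intro p q h
    induction h with
    | rel _ _ hpq =>
      exact Relation.EqvGen.rel _ _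
        (hpq.imp (fun h => h.concat_right b) (fun h => h.concat_right b))
    | refl _ => exact Relation.EqvGen.refl _
    | symm _ _ _ ih => exact Relation.EqvGen.symm _ _ ih
    | trans _ _ _ _ _ ih1 ih2 => exact Relation.EqvGen.trans _ _ _ ih1 ih2
  have right : ∀ {p q : GPath G v w}, CEq k p q → CEq k (x.concat p) (x.concat q) := by
    intro p q h
    induction h with
    | rel _ _ hpq =>
      exact Relation.EqvGen.rel _ _
        (hpq.imp (fun h => h.concat_left x) (fun h => h.concat_left x))
    | refl _ => exact Relation.EqvGen.refl _
    | symm _ _ _ ih => exact Relation.EqvGen.symm _ _ ih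
    | trans _ _ _ _ _ ih1 ih2 => exact Relation.EqvGen.trans _ _ _ ih1 ih2
  exact Relation.EqvGen.trans _ _ _ (left ha) (right hb)

/-- Let `f : G → H` be a graph map with `f(v) = w`, and `k ≥ 2`.  Then every path `γ` in `G`
from `v` to `v` yields a path `f ∘ γ` in `H` from `w` to `w`; if `γ ≃_k γ'` then
`f ∘ γ ≃_k f ∘ γ'`; and consequently `f` induces a homomorphism
`π₁^k[G,v] → π₁^k[H,w]` (a map on `≃_k`-classes sending `[γ]_k` to `[f ∘ γ]_k` and
respecting concatenation). -/
theorem graphMap_induces_hom {V W : Type*} (G : SimpleGraph V) (H : SimpleGraph W)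
    (f : V → W) (hf : ∀ x y : V, G.Adj x y → H.Adj (f x) (f y) ∨ f x = f y)
    (v : V) (w : W) (hfv : f v = w) (k : ℕ) (hk : 2 ≤ k) :
    (∀ γ : GPath G v v, ∃ δ : GPath H w w,
      δ.len = γ.len ∧ ∀ i : ℕ, δ.toFun i = f (γ.toFun i)) ∧
    (∀ γ γ' : GPath G v v, CEq k γ γ' →
      ∀ δ δ' : GPath H w w,
        (δ.len = γ.len ∧ ∀ i : ℕ, δ.toFun i = f (γ.toFun i)) →
        (δ'.len = γ'.len ∧ ∀ i : ℕ, δ'.toFun i = f (γ'.toFun i)) →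
        CEq k δ δ') ∧
    (∃ Φ : Quot (CEq k (G := G) (v := v) (w := v)) →
           Quot (CEq k (G := H) (v := w) (w := w)),
      (∀ (γ : GPath G v v) (δ : GPath H w w),
        (δ.len = γ.len ∧ ∀ i : ℕ, δ.toFun i = f (γ.toFun i)) →
        Φ (Quot.mk _ γ) = Quot.mk _ δ) ∧
      (∀ (a b : GPath G v v) (x y : GPath H w w),
        Φ (Quot.mk _ a) = Quot.mk _ x → Φ (Quot.mk _ b) = Quot.mk _ y →
        Φ (Quot.mk _ (a.concat b)) = Quot.mk _ (x.concat y))) := by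

  subst hfv
  have key : ∀ (γ : GPath G v v) (δ : GPath H (f v) (f v)),
      (δ.len = γ.len ∧ ∀ i, δ.toFun i = f (γ.toFun i)) → δ = γ.map f hf := by
    intro γ δ ⟨h1, h2⟩
    exact GPath.ext' h1 h2
  have mapCEq : ∀ γ γ' : GPath G v v, CEq k γ γ' → CEq k (γ.map f hf) (γ'.map f hf) := by
    intro γ γ' h
    induction h with
    | rel a b hab =>
      apply Relation.EqvGen.rel
      rcases hab with ⟨hlen, x, hx, h1, h2⟩ | ⟨hlen, i₀, hi₀, h1, h2⟩
      · exact Or.inl ⟨hlen, x, hx, fun i hi => congrArg f (h1 i hi),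
          fun i hi => congrArg f (h2 i hi)⟩
      · exact Or.inr ⟨hlen, i₀, hi₀, fun i hi => congrArg f (h1 i hi),
          fun i hi => congrArg f (h2 i hi)⟩
    | refl _ => exact Relation.EqvGen.refl _
    | symm _ _ _ ih => exact Relation.EqvGen.symm _ _ ih
    | trans _ _ _ _ _ ih1 ih2 => exact Relation.EqvGen.trans _ _ _ ih1 ih2
  refine ⟨fun γ => ⟨γ.map f hf, rfl, fun _ => rfl⟩, ?_, ?_⟩
  · intro γ γ' h δ δ' hδ hδ'
    rw [key γ δ hδ, key γ' δ' hδ']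
    exact mapCEq γ γ' h
  · refine ⟨Quot.lift (fun γ => Quot.mk _ (γ.map f hf))
      (fun a b h => Quot.sound (mapCEq a b h)), ?_, ?_⟩
    · intro γ δ hδ
      rw [key γ δ hδ]
    · intro a b x y hx hy
      have hmap : (a.concat b).map f hf = (a.map f hf).concat (b.map f hf) := by
        refine GPath.ext' rfl fun i => ?_
        show f ((a.concat b).toFun i) = (GPath.concat _ _).toFun i
        by_cases h : i ≤ a.len
        · rw [GPath.concat_toFun_le a b h,
            GPath.concat_toFun_le (a.map f hf) (b.map f hf) (show i ≤ a.len from h)]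
          rfl
        · rw [GPath.concat_toFun_ge a b (by omega),
            GPath.concat_toFun_ge (a.map f hf) (b.map f hf) (show a.len ≤ i by omega)]
          rfl
      have exact : ∀ {p q : GPath H (f v) (f v)},
          Quot.mk (CEq k) p = Quot.mk (CEq k) q → CEq k p q := by
        intro p q h
        exact ((Relation.EqvGen.is_equivalence _).eqvGen_iff).mp (Quot.eq.mp h)
      show Quot.mk _ ((a.concat b).map f hf) = Quot.mk _ (x.concat y)
      rw [hmap]
      exact Quot.sound (CEq.concat (exact hx) (exact hy))
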